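/- Let p ∈ (0,1) with p ≠ 1/2, q = 1 - p, let X be a Bernoulli(p) random variable, and let Y be a symmetrizer for X (Y independent of X with finite variance and X + Y symmetric around zero) achieving the minimum variance, i.e., Var(Y) = pq. Then Y has the same distribution as -X: P(Y = -1) = p and P(Y = 0) = q. Hence the minimum variance symmetrizer of Bernoulli(p) is unique in distribution. -/

import Mathlib

open MeasureTheory ProbabilityTheory

noncomputable def wfun (y : ℝ) : ℝ :=
  (-1 : ℝ) ^ (⌊y⌋) * (Int.fract y * (1 - Int.fract y) + (Int.fract y * (1 - Int.fract y)) ^ 2)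

lemma wfun_measurable : Measurable wfun := by
  apply Measurable.mul
  · exact (measurable_from_top (f := fun n : ℤ => ((-1:ℝ)^n))).comp Int.measurable_floor
  · exact ((measurable_fract.mul (measurable_const.sub measurable_fract))).add
      ((measurable_fract.mul (measurable_const.sub measurable_fract)).pow_const 2)

lemma neg_one_zpow_abs (n : ℤ) : (-1 : ℝ) ^ n = 1 ∨ (-1 : ℝ) ^ n = -1 := by
  rcases Int.even_or_odd n with h | h
  · exact Or.inl h.neg_one_zpow
  · exact Or.inr h.neg_one_zpow

lemma wfun_abs_le (y : ℝ) : |wfun y| ≤ 5/16 := by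
  have h0 := Int.fract_nonneg y
  have h1 := (Int.fract_lt_one y).le
  have hr : Int.fract y * (1 - Int.fract y) ≤ 1/4 := by nlinarith [sq_nonneg (Int.fract y - 1/2)]
  have hr0 : 0 ≤ Int.fract y * (1 - Int.fract y) := by nlinarith
  rcases neg_one_zpow_abs ⌊y⌋ with h | h <;> rw [wfun, h] <;> rw [abs_le] <;> constructor <;> nlinarith

lemma wfun_add_one (y : ℝ) : wfun (y + 1) = - wfun y := by
  rw [wfun, wfun, Int.fract_add_one, Int.floor_add_one, zpow_add_one₀ (by norm_num : (-1:ℝ) ≠ 0)]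
  ring

lemma wfun_neg (y : ℝ) : wfun (-y) = - wfun y := by
  by_cases h : Int.fract y = 0
  · have h' : Int.fract (-y) = 0 := by
      obtain ⟨k, hk⟩ : ∃ k : ℤ, y = k := ⟨⌊y⌋, by
        have := Int.floor_add_fract y; rw [h, add_zero] at this; exact this.symm⟩
      rw [hk, ← Int.cast_neg, Int.fract_intCast]
    rw [wfun, wfun, h, h']; ring
  · have hf : Int.fract (-y) = 1 - Int.fract y := Int.fract_neg h
    have hfl : ⌊-y⌋ = -⌊y⌋ - 1 := by
      rw [Int.floor_eq_iff]
      push_cast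
      have h2 : (⌊y⌋ : ℝ) + Int.fract y = y := Int.floor_add_fract y
      have h3 : 0 < Int.fract y := lt_of_le_of_ne (Int.fract_nonneg y) (Ne.symm h)
      have h4 : Int.fract y < 1 := Int.fract_lt_one y
      constructor
      · nlinarith
      · nlinarith
    rw [wfun, wfun, hf, hfl]
    have : (-1 : ℝ) ^ (-⌊y⌋ - 1) = -((-1 : ℝ) ^ ⌊y⌋) := by
      rcases Int.even_or_odd ⌊y⌋ with he | he
      · have ho : Odd (-⌊y⌋ - 1) := by
          rcases he with ⟨k, hk⟩; exact ⟨-k - 1, by omega⟩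
        rw [he.neg_one_zpow, ho.neg_one_zpow]
      · have ho : Even (-⌊y⌋ - 1) := by
          rcases he with ⟨k, hk⟩; exact ⟨-k - 1, by omega⟩
        rw [he.neg_one_zpow, ho.neg_one_zpow]; norm_num
    rw [this]; ring

lemma wfun_key (y : ℝ) : 0 < y^2 + y - wfun y ∨ y = 0 ∨ y = -1 := by
  have hx0 := Int.fract_nonneg y
  have hx1 := Int.fract_lt_one y
  have hxy : (⌊y⌋ : ℝ) + Int.fract y = y := Int.floor_add_fract y
  set x := Int.fract y with hxdef
  have hr : x * (1 - x) ≤ 1/4 := by nlinarith [sq_nonneg (x - 1/2)]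
  have hr0 : 0 ≤ x * (1 - x) := by nlinarith
  have hr2 : (x * (1 - x))^2 ≤ 1/16 := by nlinarith
  have hcase : ⌊y⌋ ≤ -3 ∨ ⌊y⌋ = -2 ∨ ⌊y⌋ = -1 ∨ ⌊y⌋ = 0 ∨ 1 ≤ ⌊y⌋ := by omega
  rcases hcase with h | h | h | h | h
  · left
    have hyl : y < -2 := by
      have h3 : (⌊y⌋ : ℝ) ≤ -3 := by exact_mod_cast Int.cast_le.mpr h
      nlinarith
    have hyy : 0 < y^2 + y - 2 := by
      nlinarith [mul_pos (by linarith : (0:ℝ) < -(y+2)) (by linarith : (0:ℝ) < 1 - y)]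
    rcases neg_one_zpow_abs ⌊y⌋ with hs | hs <;>
      · have hw : wfun y = (-1:ℝ)^(⌊y⌋) * (x * (1 - x) + (x * (1 - x))^2) := rfl
        rw [hw, hs]; nlinarith
  · left
    have hy : y = x - 2 := by rw [h] at hxy; push_cast at hxy; linarith
    have hs : (-1:ℝ) ^ (⌊y⌋) = 1 := by rw [h]; exact (by decide : Even (-2:ℤ)).neg_one_zpow
    have hw : wfun y = x * (1 - x) + (x * (1 - x))^2 := by
      rw [show wfun y = (-1:ℝ)^(⌊y⌋) * (x * (1 - x) + (x * (1 - x))^2) from rfl, hs, one_mul]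
    rw [hw, hy]
    have h1 : 0 < (1-x)^2 := pow_pos (by linarith) 2
    have h2 : 0 < 2 - x^2 := by nlinarith
    nlinarith [mul_pos h1 h2]
  · have hy : y = x - 1 := by rw [h] at hxy; push_cast at hxy; linarith
    have hs : (-1:ℝ) ^ (⌊y⌋) = -1 := by rw [h]; exact (by decide : Odd (-1:ℤ)).neg_one_zpow
    have hw : wfun y = -(x * (1 - x) + (x * (1 - x))^2) := by
      rw [show wfun y = (-1:ℝ)^(⌊y⌋) * (x * (1 - x) + (x * (1 - x))^2) from rfl, hs]; ring
    rcases eq_or_lt_of_le hx0 with hx | hx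
    · right; right; rw [hy, ← hx]; ring
    · left
      rw [hw, hy]
      have h1 : 0 < (1-x)^2 := pow_pos (by linarith) 2
      have h2 : 0 < x^2 := pow_pos hx 2
      nlinarith [mul_pos h2 h1]
  · have hy : y = x := by rw [h] at hxy; push_cast at hxy; linarith
    have hs : (-1:ℝ) ^ (⌊y⌋) = 1 := by rw [h]; exact (by decide : Even (0:ℤ)).neg_one_zpow
    have hw : wfun y = x * (1 - x) + (x * (1 - x))^2 := by
      rw [show wfun y = (-1:ℝ)^(⌊y⌋) * (x * (1 - x) + (x * (1 - x))^2) from rfl, hs, one_mul]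
    rcases eq_or_lt_of_le hx0 with hx | hx
    · right; left; rw [hy, ← hx]
    · left
      rw [hw, hy]
      have h1 : 0 < x^2 := pow_pos hx 2
      nlinarith [sq_nonneg (x*(1-x)), sq_nonneg (1-x), mul_pos h1 (mul_pos hx hx)]
  · left
    have hyl : 1 ≤ y := by
      have h3 : (1:ℝ) ≤ (⌊y⌋ : ℝ) := by exact_mod_cast h
      nlinarith
    have hyy : 0 ≤ y^2 + y - 2 := by
      nlinarith [mul_nonneg (by linarith : (0:ℝ) ≤ y - 1) (by linarith : (0:ℝ) ≤ y + 2)]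
    rcases neg_one_zpow_abs ⌊y⌋ with hs | hs <;>
      · have hw : wfun y = (-1:ℝ)^(⌊y⌋) * (x * (1 - x) + (x * (1 - x))^2) := rfl
        rw [hw, hs]; nlinarith

lemma wfun_zero : wfun 0 = 0 := by rw [wfun]; norm_num

lemma wfun_neg_one : wfun (-1) = 0 := by
  rw [wfun]
  have : Int.fract (-1 : ℝ) = 0 := by
    rw [show (-1:ℝ) = ((-1:ℤ):ℝ) by norm_num, Int.fract_intCast]
  rw [this]; ring

lemma wfun_nonneg (y : ℝ) : 0 ≤ y^2 + y - wfun y := by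
  rcases wfun_key y with h | h | h
  · linarith
  · rw [h, wfun_zero]; norm_num
  · rw [h, wfun_neg_one]; norm_num

lemma wfun_eq_zero (y : ℝ) (h : y^2 + y - wfun y = 0) : y = 0 ∨ y = -1 := by
  rcases wfun_key y with h' | h' | h'
  · linarith
  · exact Or.inl h'
  · exact Or.inr h'

/-- Generic characterization: a random variable supported on `{-1, 0}` with the right masses
has the two-point distribution. -/
lemma map_eq_aux {Ω : Type*} [MeasurableSpace Ω] (μ : Measure Ω) [IsProbabilityMeasure μ]
    (p : ℝ) (hp0 : 0 ≤ p) (hp1 : p ≤ 1) (Z : Ω → ℝ) (hZ : Measurable Z)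
    (h1 : μ {ω | Z ω = -1} = ENNReal.ofReal p)
    (h0 : μ {ω | Z ω = 0} = ENNReal.ofReal (1 - p)) :
    μ.map Z = ENNReal.ofReal p • Measure.dirac (-1 : ℝ)
      + ENNReal.ofReal (1 - p) • Measure.dirac (0 : ℝ) := by
  classical
  have hC : MeasurableSet {ω | Z ω = -1} := hZ (measurableSet_singleton (-1))
  have hD : MeasurableSet {ω | Z ω = 0} := hZ (measurableSet_singleton 0)
  have hdisj : Disjoint {ω | Z ω = -1} {ω | Z ω = 0} := by
    rw [Set.disjoint_left]
    intro ω hω hω'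
    simp only [Set.mem_setOf_eq] at hω hω'
    rw [hω'] at hω; norm_num at hω
  have hsum : ENNReal.ofReal p + ENNReal.ofReal (1 - p) = 1 := by
    rw [← ENNReal.ofReal_add hp0 (by linarith)]
    norm_num
  have hunion : μ ({ω | Z ω = -1} ∪ {ω | Z ω = 0}) = 1 := by
    rw [measure_union hdisj hD, h1, h0, hsum]
  have hcompl : μ ({ω | Z ω = -1} ∪ {ω | Z ω = 0})ᶜ = 0 := by
    rw [measure_compl (hC.union hD) (measure_ne_top _ _), hunion, measure_univ, tsub_self]
  ext s hs
  rw [Measure.map_apply hZ hs]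
  have hkey : μ (Z ⁻¹' s) = μ (Z ⁻¹' s ∩ ({ω | Z ω = -1} ∪ {ω | Z ω = 0})) := by
    have := measure_inter_add_diff (μ := μ) (Z ⁻¹' s) (hC.union hD)
    have hdiffnull : μ (Z ⁻¹' s \ ({ω | Z ω = -1} ∪ {ω | Z ω = 0})) = 0 :=
      measure_mono_null (by intro ω hω; exact hω.2) hcompl
    rw [hdiffnull, add_zero] at this
    exact this.symm
  rw [hkey, Set.inter_union_distrib_left,
    measure_union (hdisj.mono (Set.inter_subset_right) (Set.inter_subset_right))
      (hs.preimage hZ |>.inter hD)]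
  have e1 : μ (Z ⁻¹' s ∩ {ω | Z ω = -1}) = if (-1:ℝ) ∈ s then ENNReal.ofReal p else 0 := by
    by_cases hm : (-1:ℝ) ∈ s
    · rw [if_pos hm, ← h1]
      congr 1
      ext ω
      simp only [Set.mem_inter_iff, Set.mem_preimage, Set.mem_setOf_eq]
      exact ⟨fun h => h.2, fun h => ⟨by rw [h]; exact hm, h⟩⟩
    · rw [if_neg hm]
      have he : Z ⁻¹' s ∩ {ω | Z ω = -1} = ∅ := by
        ext ω
        simp only [Set.mem_inter_iff, Set.mem_preimage, Set.mem_setOf_eq, Set.mem_empty_iff_false,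
          iff_false, not_and]
        intro hω hω'; exact hm (hω' ▸ hω)
      rw [he, measure_empty]
  have e0 : μ (Z ⁻¹' s ∩ {ω | Z ω = 0}) = if (0:ℝ) ∈ s then ENNReal.ofReal (1 - p) else 0 := by
    by_cases hm : (0:ℝ) ∈ s
    · rw [if_pos hm, ← h0]
      congr 1
      ext ω
      simp only [Set.mem_inter_iff, Set.mem_preimage, Set.mem_setOf_eq]
      exact ⟨fun h => h.2, fun h => ⟨by rw [h]; exact hm, h⟩⟩
    · rw [if_neg hm]
      have he : Z ⁻¹' s ∩ {ω | Z ω = 0} = ∅ := by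
        ext ω
        simp only [Set.mem_inter_iff, Set.mem_preimage, Set.mem_setOf_eq, Set.mem_empty_iff_false,
          iff_false, not_and]
        intro hω hω'; exact hm (hω' ▸ hω)
      rw [he, measure_empty]
  rw [e1, e0, Measure.add_apply, Measure.smul_apply, Measure.smul_apply, smul_eq_mul, smul_eq_mul,
    Measure.dirac_apply' _ hs, Measure.dirac_apply' _ hs, Set.indicator_apply, Set.indicator_apply]
  split_ifs <;> simp

/-- **Uniqueness of the minimum variance symmetrizer.** If `X` is Bernoulli(`p`) with
`p ∈ (0,1)`, `p ≠ 1/2`, `q = 1 - p`, and `Y` is a symmetrizer for `X` (independent of `X`,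
finite variance, `X + Y` symmetric around zero) with minimal variance `Var(Y) = pq`, then
`Y` has the distribution of `-X`: `P(Y = -1) = p` and `P(Y = 0) = q`. -/
theorem minimal_symmetrizer_unique
    {Ω : Type*} [MeasurableSpace Ω] (μ : Measure Ω) [IsProbabilityMeasure μ]
    (p : ℝ) (hp : p ∈ Set.Ioo (0 : ℝ) 1) (hp_ne : p ≠ 1 / 2)
    (X Y : Ω → ℝ) (hX : Measurable X) (hY : Measurable Y)
    (hX1 : μ {ω | X ω = 1} = ENNReal.ofReal p)
    (hX0 : μ {ω | X ω = 0} = ENNReal.ofReal (1 - p))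
    (hindep : IndepFun X Y μ)
    (hY_L2 : MemLp Y 2 μ)
    (hsymm : μ.map (fun ω => X ω + Y ω) = μ.map (fun ω => -(X ω + Y ω)))
    (hvar : variance Y μ = p * (1 - p)) :
    μ.map Y = μ.map (fun ω => -X ω) ∧
    μ {ω | Y ω = -1} = ENNReal.ofReal p ∧
    μ {ω | Y ω = 0} = ENNReal.ofReal (1 - p) := by
  classical
  obtain ⟨hp0, hp1⟩ := hp
  have hA : MeasurableSet {ω | X ω = 1} := hX (measurableSet_singleton 1)
  have hB : MeasurableSet {ω | X ω = 0} := hX (measurableSet_singleton 0)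
  have hdisjX : Disjoint {ω | X ω = 1} {ω | X ω = 0} := by
    rw [Set.disjoint_left]
    intro ω h h'
    simp only [Set.mem_setOf_eq] at h h'
    rw [h'] at h; norm_num at h
  have hsum : ENNReal.ofReal p + ENNReal.ofReal (1 - p) = 1 := by
    rw [← ENNReal.ofReal_add hp0.le (by linarith)]; norm_num
  have hunionX : μ ({ω | X ω = 1} ∪ {ω | X ω = 0}) = 1 := by
    rw [measure_union hdisjX hB, hX1, hX0, hsum]
  have hcomplX : μ ({ω | X ω = 1} ∪ {ω | X ω = 0})ᶜ = 0 := by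
    rw [measure_compl (hA.union hB) (measure_ne_top _ _), hunionX, measure_univ, tsub_self]
  have haeX : ∀ᵐ ω ∂μ, X ω = 1 ∨ X ω = 0 := by
    rw [ae_iff]
    have hset : {ω | ¬(X ω = 1 ∨ X ω = 0)} = ({ω | X ω = 1} ∪ {ω | X ω = 0})ᶜ := by
      ext ω; simp [not_or]
    rw [hset]; exact hcomplX
  -- integrability
  have hIntX : Integrable X μ := by
    refine (integrable_const (1:ℝ)).mono' hX.aestronglyMeasurable ?_
    filter_upwards [haeX] with ω h
    rcases h with h | h <;> rw [h] <;> norm_num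
  have hIntY : Integrable Y μ := hY_L2.integrable one_le_two
  have hIntY2 : Integrable (fun ω => (Y ω)^2) μ := hY_L2.integrable_sq
  have hIntwY : Integrable (fun ω => wfun (Y ω)) μ :=
    (integrable_const (5/16:ℝ)).mono' (wfun_measurable.comp hY).aestronglyMeasurable
      (ae_of_all _ fun ω => wfun_abs_le _)
  -- E[X] = p
  have hEX : ∫ ω, X ω ∂μ = p := by
    have hXind : X =ᵐ[μ] fun ω => Set.indicator {ω | X ω = 1} 1 ω := by
      filter_upwards [haeX] with ω h
      rcases h with h | h <;> simp [Set.indicator_apply, Set.mem_setOf_eq, h]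
    rw [integral_congr_ae hXind, integral_indicator_one hA, measureReal_def, hX1, ENNReal.toReal_ofReal hp0.le]
  -- E[X + Y] = 0 from symmetry
  have hSm : Measurable fun ω => X ω + Y ω := hX.add hY
  have hS0 : ∫ ω, (X ω + Y ω) ∂μ = 0 := by
    have e1 : ∫ y, y ∂(μ.map (fun ω => X ω + Y ω)) = ∫ ω, (X ω + Y ω) ∂μ :=
      integral_map hSm.aemeasurable aestronglyMeasurable_id
    have e2 : ∫ y, y ∂(μ.map (fun ω => -(X ω + Y ω))) = ∫ ω, -(X ω + Y ω) ∂μ :=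
      integral_map hSm.neg.aemeasurable aestronglyMeasurable_id
    rw [hsymm, e2, integral_neg] at e1
    linarith
  have hEY : ∫ ω, Y ω ∂μ = -p := by
    rw [integral_add hIntX hIntY, hEX] at hS0
    linarith
  -- E[wfun(X+Y)] = 0 from symmetry
  have hwS0 : ∫ ω, wfun (X ω + Y ω) ∂μ = 0 := by
    have e1 : ∫ y, wfun y ∂(μ.map (fun ω => X ω + Y ω)) = ∫ ω, wfun (X ω + Y ω) ∂μ :=
      integral_map hSm.aemeasurable wfun_measurable.aestronglyMeasurable
    have e2 : ∫ y, wfun y ∂(μ.map (fun ω => -(X ω + Y ω))) = ∫ ω, wfun (-(X ω + Y ω)) ∂μ :=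
      integral_map hSm.neg.aemeasurable wfun_measurable.aestronglyMeasurable
    rw [hsymm, e2] at e1
    simp only [wfun_neg] at e1
    rw [integral_neg] at e1
    linarith
  -- decomposition of E[wfun(X+Y)] using independence
  set φ1 : ℝ → ℝ := Set.indicator {(1:ℝ)} 1 with hφ1def
  set φ0 : ℝ → ℝ := Set.indicator {(0:ℝ)} 1 with hφ0def
  have hφ1m : Measurable φ1 := measurable_one.indicator (measurableSet_singleton 1)
  have hφ0m : Measurable φ0 := measurable_one.indicator (measurableSet_singleton 0)
  have hψ1m : Measurable fun y => wfun (1 + y) :=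
    wfun_measurable.comp (measurable_const.add measurable_id)
  have hφ1b : ∀ x, |φ1 x| ≤ 1 := by
    intro x; rw [hφ1def]; simp only [Set.indicator_apply]; split_ifs <;> norm_num
  have hφ0b : ∀ x, |φ0 x| ≤ 1 := by
    intro x; rw [hφ0def]; simp only [Set.indicator_apply]; split_ifs <;> norm_num
  have hInt1 : Integrable (fun ω => φ1 (X ω) * wfun (1 + Y ω)) μ := by
    refine (integrable_const (5/16:ℝ)).mono'
      (((hφ1m.comp hX).mul (hψ1m.comp hY)).aestronglyMeasurable) (ae_of_all _ fun ω => ?_)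
    rw [Real.norm_eq_abs, abs_mul]
    calc |φ1 (X ω)| * |wfun (1 + Y ω)| ≤ 1 * (5/16) :=
          mul_le_mul (hφ1b _) (wfun_abs_le _) (abs_nonneg _) zero_le_one
      _ = 5/16 := one_mul _
  have hInt0 : Integrable (fun ω => φ0 (X ω) * wfun (Y ω)) μ := by
    refine (integrable_const (5/16:ℝ)).mono'
      (((hφ0m.comp hX).mul ((wfun_measurable.comp hY))).aestronglyMeasurable)
      (ae_of_all _ fun ω => ?_)
    rw [Real.norm_eq_abs, abs_mul]
    calc |φ0 (X ω)| * |wfun (Y ω)| ≤ 1 * (5/16) :=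
          mul_le_mul (hφ0b _) (wfun_abs_le _) (abs_nonneg _) zero_le_one
      _ = 5/16 := one_mul _
  have hdecomp : (fun ω => wfun (X ω + Y ω)) =ᵐ[μ]
      fun ω => φ1 (X ω) * wfun (1 + Y ω) + φ0 (X ω) * wfun (Y ω) := by
    filter_upwards [haeX] with ω h
    rcases h with h | h <;>
      simp [h, hφ1def, hφ0def, Set.indicator_apply]
  have hEφ1 : ∫ ω, φ1 (X ω) ∂μ = p := by
    have : (fun ω => φ1 (X ω)) = fun ω => Set.indicator {ω | X ω = 1} 1 ω := by
      funext ω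
      rw [hφ1def]
      simp [Set.indicator_apply, Set.mem_setOf_eq]
    rw [this, integral_indicator_one hA, measureReal_def, hX1, ENNReal.toReal_ofReal hp0.le]
  have hEφ0 : ∫ ω, φ0 (X ω) ∂μ = 1 - p := by
    have : (fun ω => φ0 (X ω)) = fun ω => Set.indicator {ω | X ω = 0} 1 ω := by
      funext ω
      rw [hφ0def]
      simp [Set.indicator_apply, Set.mem_setOf_eq]
    rw [this, integral_indicator_one hB, measureReal_def, hX0, ENNReal.toReal_ofReal (by linarith)]
  have hshift : ∫ ω, wfun (1 + Y ω) ∂μ = - ∫ ω, wfun (Y ω) ∂μ := by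
    have : ∀ ω, wfun (1 + Y ω) = -wfun (Y ω) := fun ω => by
      rw [add_comm]; exact wfun_add_one (Y ω)
    simp only [this]
    exact integral_neg _
  have hmul1 : ∫ ω, φ1 (X ω) * wfun (1 + Y ω) ∂μ = p * ∫ ω, wfun (1 + Y ω) ∂μ := by
    have h := hindep.integral_fun_comp_mul_comp hX.aemeasurable hY.aemeasurable
      hφ1m.aestronglyMeasurable hψ1m.aestronglyMeasurable
    rw [h, hEφ1]
  have hmul0 : ∫ ω, φ0 (X ω) * wfun (Y ω) ∂μ = (1 - p) * ∫ ω, wfun (Y ω) ∂μ := by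
    have h := hindep.integral_fun_comp_mul_comp hX.aemeasurable hY.aemeasurable
      hφ0m.aestronglyMeasurable wfun_measurable.aestronglyMeasurable
    rw [h, hEφ0]
  have hEwY : ∫ ω, wfun (Y ω) ∂μ = 0 := by
    have hx := hwS0
    rw [integral_congr_ae hdecomp, integral_add hInt1 hInt0, hmul1, hmul0, hshift] at hx
    have h2p : 1 - 2*p ≠ 0 := fun h => hp_ne (by linarith)
    have : (1 - 2*p) * ∫ ω, wfun (Y ω) ∂μ = 0 := by linarith
    rcases mul_eq_zero.mp this with h | h
    · exact absurd h h2p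
    · exact h
  -- E[Y^2] = p
  have hEY2 : ∫ ω, (Y ω)^2 ∂μ = p := by
    have hv := variance_eq_sub hY_L2
    rw [hvar] at hv
    simp only [Pi.pow_apply] at hv
    rw [hEY] at hv
    nlinarith [hv]
  -- E[g(Y)] = 0 with g ≥ 0
  have hIntY2Y : Integrable (fun ω => (Y ω)^2 + Y ω) μ := hIntY2.add hIntY
  have hg0 : ∫ ω, ((Y ω)^2 + Y ω - wfun (Y ω)) ∂μ = 0 := by
    rw [integral_sub hIntY2Y hIntwY, integral_add hIntY2 hIntY, hEY2, hEY, hEwY]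
    ring
  have hgz : (fun ω => (Y ω)^2 + Y ω - wfun (Y ω)) =ᵐ[μ] 0 :=
    (integral_eq_zero_iff_of_nonneg (fun ω => wfun_nonneg (Y ω))
      (hIntY2Y.sub hIntwY)).mp hg0
  have haeY : ∀ᵐ ω ∂μ, Y ω = 0 ∨ Y ω = -1 := by
    filter_upwards [hgz] with ω h
    exact wfun_eq_zero _ (by simpa using h)
  -- distribution of Y
  have hC : MeasurableSet {ω | Y ω = -1} := hY (measurableSet_singleton (-1))
  have hD : MeasurableSet {ω | Y ω = 0} := hY (measurableSet_singleton 0)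
  have hμC : μ {ω | Y ω = -1} = ENNReal.ofReal p := by
    have hEYind : Y =ᵐ[μ] fun ω => -(Set.indicator {ω | Y ω = -1} 1 ω) := by
      filter_upwards [haeY] with ω h
      rcases h with h | h <;> simp [Set.indicator_apply, Set.mem_setOf_eq, h]
    have hthis : ∫ ω, Y ω ∂μ = -(μ {ω | Y ω = -1}).toReal := by
      rw [integral_congr_ae hEYind, integral_neg, integral_indicator_one hC, measureReal_def]
    rw [hEY] at hthis
    have htr : (μ {ω | Y ω = -1}).toReal = p := by linarith
    rw [← htr, ENNReal.ofReal_toReal (measure_ne_top _ _)]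
  have hdisjY : Disjoint {ω | Y ω = -1} {ω | Y ω = 0} := by
    rw [Set.disjoint_left]
    intro ω h h'
    simp only [Set.mem_setOf_eq] at h h'
    rw [h'] at h; norm_num at h
  have hcomplY : μ ({ω | Y ω = -1} ∪ {ω | Y ω = 0})ᶜ = 0 := by
    have hset : {ω | ¬(Y ω = 0 ∨ Y ω = -1)} = ({ω | Y ω = -1} ∪ {ω | Y ω = 0})ᶜ := by
      ext ω; simp [not_or]; tauto
    rw [← hset, ← ae_iff]
    exact haeY
  have hunionY : μ ({ω | Y ω = -1} ∪ {ω | Y ω = 0}) = 1 := by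
    have h := measure_compl (μ := μ) (hC.union hD) (measure_ne_top μ _)
    rw [hcomplY, measure_univ] at h
    have hle : (1:ENNReal) ≤ μ ({ω | Y ω = -1} ∪ {ω | Y ω = 0}) := tsub_eq_zero_iff_le.mp h.symm
    exact le_antisymm prob_le_one hle
  have hμD : μ {ω | Y ω = 0} = ENNReal.ofReal (1 - p) := by
    have hsumY : ENNReal.ofReal p + μ {ω | Y ω = 0} = 1 := by
      rw [← hμC, ← measure_union hdisjY hD, hunionY]
    rw [← hsum] at hsumY
    exact (ENNReal.add_right_inj ENNReal.ofReal_ne_top).mp hsumY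
  -- map equality
  have hmapY := map_eq_aux μ p hp0.le hp1.le Y hY hμC hμD
  have hX1' : μ {ω | -X ω = -1} = ENNReal.ofReal p := by
    have : {ω | -X ω = -1} = {ω | X ω = 1} := by
      ext ω; simp only [Set.mem_setOf_eq]
      constructor <;> intro h <;> linarith
    rw [this, hX1]
  have hX0' : μ {ω | -X ω = 0} = ENNReal.ofReal (1 - p) := by
    have : {ω | -X ω = 0} = {ω | X ω = 0} := by
      ext ω; simp only [Set.mem_setOf_eq, neg_eq_zero]
    rw [this, hX0]
  have hmapX := map_eq_aux μ p hp0.le hp1.le (fun ω => -X ω) hX.neg hX1' hX0'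
  exact ⟨hmapY.trans hmapX.symm, hμC, hμD⟩
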